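/- For every real a ≥ 2 and every x ∈ (0, π), ((sin x)/x)^a ≤ cos²(x/2). -/
import Mathlib

open Real

theorem sinc_pow_le_cos_sq (a : ℝ) (ha : 2 ≤ a) (x : ℝ) (hx : x ∈ Set.Ioo (0 : ℝ) π) :
    (Real.sin x / x) ^ a ≤ Real.cos (x / 2) ^ 2 := by
  obtain ⟨hx0, hxπ⟩ := hx
  have hs : 0 < Real.sin x := Real.sin_pos_of_pos_of_lt_pi hx0 hxπ
  have hlt : Real.sin x < x := Real.sin_lt hx0
  have hq0 : 0 < Real.sin x / x := div_pos hs hx0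
  have hq1 : Real.sin x / x ≤ 1 := (div_le_one hx0).2 hlt.le
  have h1 : (Real.sin x / x) ^ a ≤ (Real.sin x / x) ^ (2:ℝ) :=
    Real.rpow_le_rpow_of_exponent_ge hq0 hq1 ha
  have h2 : (Real.sin x / x) ^ (2:ℝ) = (Real.sin x / x) ^ (2:ℕ) := by
    rw [← Real.rpow_natCast]; norm_num
  rw [h2] at h1
  refine h1.trans ?_
  have hsin : Real.sin x = 2 * Real.sin (x/2) * Real.cos (x/2) := by
    rw [← Real.sin_two_mul]; ring_nf
  have ht0 : 0 < x / 2 := by linarith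
  have hst : Real.sin (x/2) ≤ x/2 := (Real.sin_lt ht0).le
  have hst0 : 0 ≤ Real.sin (x/2) :=
    Real.sin_nonneg_of_nonneg_of_le_pi ht0.le (by linarith [Real.pi_pos])
  have hc0 : 0 ≤ Real.cos (x/2) :=
    Real.cos_nonneg_of_mem_Icc ⟨by linarith [Real.pi_pos], by linarith⟩
  have key : Real.sin x / x ≤ Real.cos (x/2) := by
    rw [hsin, div_le_iff₀ hx0]
    nlinarith
  have habs : |Real.sin x / x| ≤ |Real.cos (x/2)| := by
    rw [abs_of_pos hq0, abs_of_nonneg hc0]; exact key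
  exact sq_le_sq' (by linarith [abs_le.1 habs]) key
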